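/- For all real η and r ≥ 0, (1/(2√π)) ∫_{-∞}^{η} e^{-t²} erfc(r t) dt = 1/4 + (1/4)·erf(η) + T(√2·η, r). -/

import Mathlib

open MeasureTheory intervalIntegral

/-- The error function. -/
noncomputable def erf (z : ℝ) : ℝ :=
  (2 / Real.sqrt Real.pi) * ∫ t in (0 : ℝ)..z, Real.exp (-t ^ 2)

/-- The complementary error function. -/
noncomputable def erfc (z : ℝ) : ℝ := 1 - erf z

/-- Owen's T function. -/
noncomputable def owenT (h r : ℝ) : ℝ :=
  (1 / (2 * Real.pi)) * ∫ u in (0 : ℝ)..r,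
    Real.exp (-h ^ 2 * (1 + u ^ 2) / 2) / (1 + u ^ 2)

open Real Set Filter

lemma integrable_gauss : Integrable (fun t : ℝ => Real.exp (-t ^ 2)) := by
  simpa using integrable_exp_neg_mul_sq (one_pos)

lemma integrable_abs_gauss : Integrable (fun t : ℝ => |t| * Real.exp (-t ^ 2)) := by
  have := (integrable_mul_exp_neg_mul_sq (b := 1) one_pos).abs
  simpa [abs_mul, Real.abs_exp] using this

lemma gauss_Iic (η : ℝ) :
    ∫ t in Set.Iic η, Real.exp (-t ^ 2)
      = Real.sqrt Real.pi / 2 + ∫ t in (0:ℝ)..η, Real.exp (-t ^ 2) := by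
  have h0 : ∫ t in Set.Iic (0:ℝ), Real.exp (-t ^ 2) = Real.sqrt Real.pi / 2 := by
    have h1 := integral_gaussian_Ioi 1
    have h2 := integral_comp_neg_Ioi (c := 0) (f := fun t : ℝ => Real.exp (-t ^ 2))
    simp only [neg_zero, neg_sq] at h2
    rw [← h2]
    simpa using h1
  have h3 := intervalIntegral.integral_Iic_sub_Iic (a := (0:ℝ)) (b := η)
    (integrable_gauss.integrableOn) (integrable_gauss.integrableOn) (μ := volume)
  rw [h0] at h3
  linarith

lemma tendsto_exp_neg_sq (a : ℝ) (ha : 0 < a) :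
    Tendsto (fun t : ℝ => Real.exp (-a * t ^ 2)) atBot (nhds 0) := by
  have h2 : Tendsto (fun t : ℝ => t ^ 2) atBot atTop := by
    have h1 : Tendsto (fun t : ℝ => |t| ^ 2) atBot atTop :=
      (tendsto_pow_atTop (by norm_num : 2 ≠ 0)).comp tendsto_abs_atBot_atTop
    simpa [sq_abs] using h1
  have h3 : Tendsto (fun t : ℝ => -a * t ^ 2) atBot atBot := by
    have := Filter.tendsto_neg_atTop_atBot.comp (h2.const_mul_atTop ha)
    simpa [Function.comp_def, neg_mul] using this
  exact Real.tendsto_exp_atBot.comp h3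

lemma integral_Iic_mul_exp (a η : ℝ) (ha : 0 < a) :
    ∫ t in Set.Iic η, t * Real.exp (-a * t ^ 2)
      = -Real.exp (-a * η ^ 2) / (2 * a) := by
  set F : ℝ → ℝ := fun t => -Real.exp (-a * t ^ 2) / (2 * a) with hF
  have hderiv : ∀ t : ℝ, HasDerivAt F (t * Real.exp (-a * t ^ 2)) t := by
    intro t
    have h1 : HasDerivAt (fun t : ℝ => -a * t ^ 2) (-a * (2 * t)) t := by
      simpa using ((hasDerivAt_pow 2 t).const_mul (-a))
    have h2 := h1.exp
    have h3 := (h2.neg).div_const (2 * a)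
    refine h3.congr_deriv ?_
    field_simp [ha.ne']
  have hint : IntegrableOn (fun t : ℝ => t * Real.exp (-a * t ^ 2)) (Set.Iic η) :=
    (integrable_mul_exp_neg_mul_sq ha).integrableOn
  have hlim : Tendsto F atBot (nhds 0) := by
    have := ((tendsto_exp_neg_sq a ha).neg).div_const (2 * a)
    simpa [hF, neg_mul] using this
  have := MeasureTheory.integral_Iic_of_hasDerivAt_of_tendsto
    (f := F) (f' := fun t => t * Real.exp (-a * t ^ 2)) (a := η)
    (hderiv η).continuousAt.continuousWithinAt (fun x _ => hderiv x) hint hlim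
  rw [this]
  simp [hF]

lemma subst_lemma (r t : ℝ) :
    ∫ s in (0:ℝ)..(r * t), Real.exp (-s ^ 2)
      = ∫ u in (0:ℝ)..r, t * Real.exp (-(t * u) ^ 2) := by
  rw [intervalIntegral.integral_const_mul]
  have := intervalIntegral.smul_integral_comp_mul_left
    (f := fun s : ℝ => Real.exp (-s ^ 2)) (a := (0:ℝ)) (b := r) t
  rw [smul_eq_mul] at this
  rw [this, mul_zero, mul_comm t r]

lemma continuous_erf : Continuous erf := by
  unfold erf
  exact continuous_const.mul (intervalIntegral.continuous_primitive
    (fun a b => (Continuous.intervalIntegrable (by continuity) a b)) 0)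

lemma erf_abs_le (z : ℝ) : |erf z| ≤ (2 / Real.sqrt Real.pi) * |z| := by
  have h : |∫ t in (0:ℝ)..z, Real.exp (-t ^ 2)| ≤ |z| := by
    have := intervalIntegral.norm_integral_le_of_norm_le_const (C := 1)
      (f := fun t : ℝ => Real.exp (-t ^ 2)) (a := 0) (b := z)
      (fun x _ => by
        simp only [Real.norm_eq_abs, Real.abs_exp]
        exact Real.exp_le_one_iff.2 (by simpa using neg_nonpos.mpr (sq_nonneg x)))
    simpa using this
  unfold erf
  rw [abs_mul, abs_of_nonneg (by positivity : (0:ℝ) ≤ 2 / Real.sqrt Real.pi)]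
  exact mul_le_mul_of_nonneg_left h (by positivity)

lemma integrable_gauss_erf (r : ℝ) :
    Integrable (fun t : ℝ => Real.exp (-t ^ 2) * erf (r * t)) := by
  apply Integrable.mono'
    (g := fun t : ℝ => (2 / Real.sqrt Real.pi) * |r| * (|t| * Real.exp (-t ^ 2)))
    (integrable_abs_gauss.const_mul _)
  · exact ((Real.continuous_exp.comp (continuous_pow 2).neg).mul
      (continuous_erf.comp (continuous_const.mul continuous_id))).aestronglyMeasurable
  · refine Filter.Eventually.of_forall fun t => ?_
    rw [norm_mul, Real.norm_eq_abs, Real.norm_eq_abs, Real.abs_exp]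
    calc Real.exp (-t ^ 2) * |erf (r * t)|
        ≤ Real.exp (-t ^ 2) * ((2 / Real.sqrt Real.pi) * |r * t|) := by
          exact mul_le_mul_of_nonneg_left (erf_abs_le (r * t)) (Real.exp_nonneg _)
      _ = 2 / Real.sqrt Real.pi * |r| * (|t| * Real.exp (-t ^ 2)) := by
          rw [abs_mul]; ring

lemma fubini_step (η r : ℝ) :
    ∫ t in Set.Iic η, (∫ u in Set.Ioc (0:ℝ) r, t * Real.exp (-(1 + u ^ 2) * t ^ 2))
      = ∫ u in Set.Ioc (0:ℝ) r, ∫ t in Set.Iic η, t * Real.exp (-(1 + u ^ 2) * t ^ 2) := by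
  apply MeasureTheory.integral_integral_swap
  apply Integrable.mono'
    (g := fun p : ℝ × ℝ => (|p.1| * Real.exp (-p.1 ^ 2)) * (1:ℝ))
    (Integrable.mul_prod integrable_abs_gauss.integrableOn
      ((integrableOn_const_iff (C := (1:ℝ))).2 (Or.inr measure_Ioc_lt_top)))
  · apply Continuous.aestronglyMeasurable
    apply Continuous.mul (continuous_fst)
    exact Real.continuous_exp.comp (by fun_prop)
  · refine Filter.Eventually.of_forall fun p => ?_
    obtain ⟨t, u⟩ := p
    simp only [Function.uncurry_apply_pair]
    rw [norm_mul, Real.norm_eq_abs, Real.norm_eq_abs, Real.abs_exp, mul_one]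
    apply mul_le_mul_of_nonneg_left _ (abs_nonneg _)
    apply Real.exp_le_exp.2
    nlinarith [sq_nonneg (t * u)]

lemma inner_eq (r : ℝ) (hr : 0 ≤ r) (t : ℝ) :
    Real.exp (-t ^ 2) * erf (r * t)
      = (2 / Real.sqrt Real.pi) * ∫ u in Set.Ioc (0:ℝ) r, t * Real.exp (-(1 + u ^ 2) * t ^ 2) := by
  rw [erf, subst_lemma, intervalIntegral.integral_of_le hr, ← mul_assoc,
    mul_comm (Real.exp (-t ^ 2)) (2 / Real.sqrt Real.pi), mul_assoc,
    ← MeasureTheory.integral_const_mul]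
  congr 1
  refine setIntegral_congr_fun measurableSet_Ioc fun u _ => ?_
  rw [show (-(1 + u ^ 2) * t ^ 2) = (-t ^ 2) + (-(t * u) ^ 2) from by ring, Real.exp_add]
  ring

theorem bivariate_cdf_identity (η r : ℝ) (hr : 0 ≤ r) :
    (1 / (2 * Real.sqrt Real.pi)) * ∫ t in Set.Iic η, Real.exp (-t ^ 2) * erfc (r * t)
      = 1 / 4 + (1 / 4) * erf η + owenT (Real.sqrt 2 * η) r := by
  have hπ : (0:ℝ) < Real.sqrt Real.pi := Real.sqrt_pos.2 Real.pi_pos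
  have hsq : Real.sqrt Real.pi * Real.sqrt Real.pi = Real.pi :=
    Real.mul_self_sqrt Real.pi_pos.le
  set I : ℝ := ∫ u in Set.Ioc (0:ℝ) r, Real.exp (-(1 + u ^ 2) * η ^ 2) / (1 + u ^ 2) with hI
  have key : ∫ t in Set.Iic η, Real.exp (-t ^ 2) * erf (r * t)
      = (2 / Real.sqrt Real.pi) * (-(1/2) * I) := by
    calc ∫ t in Set.Iic η, Real.exp (-t ^ 2) * erf (r * t)
        = ∫ t in Set.Iic η, (2 / Real.sqrt Real.pi) *
            ∫ u in Set.Ioc (0:ℝ) r, t * Real.exp (-(1 + u ^ 2) * t ^ 2) := by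
          exact setIntegral_congr_fun measurableSet_Iic fun t _ => inner_eq r hr t
      _ = (2 / Real.sqrt Real.pi) * ∫ t in Set.Iic η,
            ∫ u in Set.Ioc (0:ℝ) r, t * Real.exp (-(1 + u ^ 2) * t ^ 2) :=
          integral_const_mul _ _
      _ = (2 / Real.sqrt Real.pi) * ∫ u in Set.Ioc (0:ℝ) r,
            ∫ t in Set.Iic η, t * Real.exp (-(1 + u ^ 2) * t ^ 2) := by
          rw [fubini_step]
      _ = (2 / Real.sqrt Real.pi) * ∫ u in Set.Ioc (0:ℝ) r,
            (-(1/2)) * (Real.exp (-(1 + u ^ 2) * η ^ 2) / (1 + u ^ 2)) := by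
          congr 1
          refine setIntegral_congr_fun measurableSet_Ioc fun u _ => ?_
          rw [integral_Iic_mul_exp (1 + u ^ 2) η (by positivity)]
          field_simp
      _ = (2 / Real.sqrt Real.pi) * (-(1/2) * I) := by
          rw [MeasureTheory.integral_const_mul]
  have hsplit : ∫ t in Set.Iic η, Real.exp (-t ^ 2) * erfc (r * t)
      = (∫ t in Set.Iic η, Real.exp (-t ^ 2))
        - ∫ t in Set.Iic η, Real.exp (-t ^ 2) * erf (r * t) := by
    simp only [erfc, mul_sub, mul_one]
    exact integral_sub integrable_gauss.integrableOn (integrable_gauss_erf r).integrableOn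
  have howen : owenT (Real.sqrt 2 * η) r = (1 / (2 * Real.pi)) * I := by
    rw [owenT, intervalIntegral.integral_of_le hr]
    congr 1
    refine setIntegral_congr_fun measurableSet_Ioc fun u _ => ?_
    congr 1
    rw [mul_pow, Real.sq_sqrt (by norm_num : (0:ℝ) ≤ 2)]
    ring
  rw [hsplit, key, gauss_Iic, howen, erf]
  field_simp
  linear_combination (-(8 * I)) * hsq
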